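/- The trace of the square of the cyclotomic matrix A satisfies tr(A²) = k(k-1) + q - 2k if k is even, and tr(A²) = k(k-1) if k is odd, where k = (q-1)/ℓ. -/

import Mathlib

open Matrix Finset Subgroup
set_option linter.unusedSectionVars false
set_option linter.unusedVariables false
set_option maxHeartbeats 1000000

attribute [local instance] Classical.propDecidable

/-- Cyclotomic number `(i, j)` with respect to generator `g` and divisor `ℓ`. -/
noncomputable def cyc {F : Type*} [Field F] [Fintype F] (g : Fˣ) (ℓ : ℕ) (i j : ℤ) : ℕ :=
  Nat.card {x : F // (∃ y : Fˣ, x = 1 + ((g ^ i * y ^ ℓ : Fˣ) : F)) ∧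
    ∃ z : Fˣ, x = ((g ^ j * z ^ ℓ : Fˣ) : F)}

/-- The cyclotomic matrix `A = [(i,j)]`, with integer entries. -/
noncomputable def cycMatrix {F : Type*} [Field F] [Fintype F] (g : Fˣ) (ℓ : ℕ) :
    Matrix (Fin ℓ) (Fin ℓ) ℤ :=
  Matrix.of fun i j => (cyc g ℓ ((i : ℕ) : ℤ) ((j : ℕ) : ℤ) : ℤ)

section Aux

variable {F : Type*} [Field F] [Fintype F]

lemma ordg (g : Fˣ) (hg : ∀ x : Fˣ, x ∈ Subgroup.zpowers g) :
    orderOf g = Fintype.card F - 1 := by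
  rw [orderOf_eq_card_of_forall_mem_zpowers hg, Nat.card_units, Nat.card_eq_fintype_card]

lemma powCrit (g : Fˣ) (ℓ : ℕ) (hg : ∀ x : Fˣ, x ∈ Subgroup.zpowers g)
    (hℓ : ℓ ∣ Fintype.card F - 1) (m : ℤ) :
    (∃ z : Fˣ, g ^ m = z ^ ℓ) ↔ (ℓ : ℤ) ∣ m := by
  constructor
  · rintro ⟨z, hz⟩
    obtain ⟨a, ha⟩ := hg z
    have h1 : g ^ (m - a * ℓ) = 1 := by
      rw [_root_.zpow_sub, hz, ← ha, _root_.zpow_mul, _root_.zpow_natCast]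
      simp
    have h2 : ((Fintype.card F - 1 : ℕ) : ℤ) ∣ m - a * ℓ := by
      rw [← ordg g hg]
      exact orderOf_dvd_iff_zpow_eq_one.mpr h1
    have h3 : (ℓ : ℤ) ∣ m - a * ℓ := dvd_trans (Int.natCast_dvd_natCast.mpr hℓ) h2
    have h4 : m = (m - a * ℓ) + ℓ * a := by ring
    rw [h4]
    exact dvd_add h3 ⟨a, rfl⟩
  · rintro ⟨a, rfl⟩
    exact ⟨g ^ a, by rw [← _root_.zpow_natCast (g ^ a) ℓ, ← _root_.zpow_mul, mul_comm]⟩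

lemma powCritNat (g : Fˣ) (ℓ : ℕ) (hg : ∀ x : Fˣ, x ∈ Subgroup.zpowers g)
    (hℓ : ℓ ∣ Fintype.card F - 1) (m : ℕ) :
    (∃ z : Fˣ, g ^ m = z ^ ℓ) ↔ ℓ ∣ m := by
  have := powCrit g ℓ hg hℓ (m : ℤ)
  rw [_root_.zpow_natCast] at this
  rw [this, Int.natCast_dvd_natCast]

lemma cosetIndex (g : Fˣ) (ℓ : ℕ) (hg : ∀ x : Fˣ, x ∈ Subgroup.zpowers g) (hpos : 0 < ℓ)
    (u : Fˣ) : ∃ i : Fin ℓ, ∃ z : Fˣ, u = g ^ (i : ℕ) * z ^ ℓ := by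
  obtain ⟨m, hm⟩ := hg u
  have hℓz : (0:ℤ) < ℓ := Int.natCast_pos.mpr hpos
  have hlt : (m % ℓ).toNat < ℓ := by
    have := Int.emod_lt_of_pos m hℓz
    have := Int.emod_nonneg m (by omega : (ℓ:ℤ) ≠ 0)
    omega
  refine ⟨⟨(m % ℓ).toNat, hlt⟩, g ^ (m / ℓ), ?_⟩
  have h1 : (((m % ℓ).toNat : ℕ) : ℤ) = m % ℓ :=
    Int.toNat_of_nonneg (Int.emod_nonneg m (by omega))
  show u = g ^ ((m % ℓ).toNat) * (g ^ (m / ℓ)) ^ ℓ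
  rw [← hm, ← _root_.zpow_natCast g ((m % ℓ).toNat), ← _root_.zpow_natCast (g ^ (m / ℓ)) ℓ, ← _root_.zpow_mul, h1]
  rw [← _root_.zpow_add]
  congr 1
  rw [mul_comm]
  exact (Int.emod_add_mul_ediv m ℓ).symm ▸ rfl
lemma cosetUnique' (g : Fˣ) (ℓ : ℕ) (hg : ∀ x : Fˣ, x ∈ Subgroup.zpowers g)
    (hℓ : ℓ ∣ Fintype.card F - 1) (i i' : Fin ℓ) (z z' : Fˣ) (hle : (i':ℕ) ≤ (i:ℕ))
    (h : g ^ (i : ℕ) * z ^ ℓ = g ^ (i' : ℕ) * z' ^ ℓ) : i = i' := by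
  have hsplit : g ^ (i:ℕ) = g ^ (i':ℕ) * g ^ ((i:ℕ) - (i':ℕ)) := by
    rw [← pow_add]
    congr 1
    omega
  rw [hsplit, mul_assoc] at h
  have h2 : g ^ ((i:ℕ) - (i':ℕ)) * z ^ ℓ = z' ^ ℓ := mul_left_cancel h
  have h3 : g ^ ((i:ℕ) - (i':ℕ)) = (z' * z⁻¹) ^ ℓ := by
    rw [mul_pow, inv_pow, ← h2, mul_assoc, mul_inv_cancel, mul_one]
  have h4 : ℓ ∣ (i:ℕ) - (i':ℕ) := (powCritNat g ℓ hg hℓ _).mp ⟨_, h3⟩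
  have h5 : (i:ℕ) - (i':ℕ) = 0 := by
    rcases Nat.eq_zero_or_pos ((i:ℕ) - (i':ℕ)) with h0 | h0
    · exact h0
    · have := Nat.le_of_dvd h0 h4
      have := i.isLt
      omega
  ext
  omega

lemma cosetUnique (g : Fˣ) (ℓ : ℕ) (hg : ∀ x : Fˣ, x ∈ Subgroup.zpowers g)
    (hℓ : ℓ ∣ Fintype.card F - 1) (i i' : Fin ℓ) (z z' : Fˣ)
    (h : g ^ (i : ℕ) * z ^ ℓ = g ^ (i' : ℕ) * z' ^ ℓ) : i = i' := by
  rcases le_total (i':ℕ) (i:ℕ) with hle | hle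
  · exact cosetUnique' g ℓ hg hℓ i i' z z' hle h
  · exact (cosetUnique' g ℓ hg hℓ i' i z' z hle h.symm).symm

variable {F : Type*} [Field F] [Fintype F]

lemma powcomm {G : Type*} [Group G] (g : G) (ℓ : ℕ) (a : ℤ) : (g ^ a) ^ ℓ = (g ^ ℓ) ^ a := by
  rw [← _root_.zpow_natCast (g ^ a) ℓ, ← _root_.zpow_mul, ← _root_.zpow_natCast g ℓ, ← _root_.zpow_mul, mul_comm]

noncomputable def Kset (ℓ : ℕ) : Finset F := by
  classical exact Finset.univ.image (fun z : Fˣ => ((z : F)) ^ ℓ)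

lemma mem_Kset {ℓ : ℕ} {x : F} : x ∈ Kset (F := F) ℓ ↔ ∃ z : Fˣ, x = ((z : F)) ^ ℓ := by
  classical
  simp [Kset, eq_comm]

lemma KsetCard (g : Fˣ) (ℓ : ℕ) (hg : ∀ x : Fˣ, x ∈ Subgroup.zpowers g)
    (hℓ : ℓ ∣ Fintype.card F - 1) :
    (Kset (F := F) ℓ).card = (Fintype.card F - 1) / ℓ := by
  classical
  have h2 : ((Kset (F := F) ℓ : Finset F) : Set F)
      = Units.val '' ((Subgroup.zpowers (g ^ ℓ) : Subgroup Fˣ) : Set Fˣ) := by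
    ext x
    simp only [Finset.mem_coe, mem_Kset, Set.mem_image, SetLike.mem_coe,
      Subgroup.mem_zpowers_iff]
    constructor
    · rintro ⟨z, rfl⟩
      obtain ⟨a, rfl⟩ := hg z
      exact ⟨(g ^ a) ^ ℓ, ⟨a, (powcomm g ℓ a).symm⟩, by push_cast; ring⟩
    · rintro ⟨u, ⟨a, rfl⟩, rfl⟩
      exact ⟨g ^ a, by rw [← powcomm g ℓ a]; push_cast; ring⟩
  calc (Kset (F := F) ℓ).card = ((Kset (F := F) ℓ : Finset F) : Set F).ncard :=
        (Set.ncard_coe_finset _).symm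
    _ = (Units.val '' ((Subgroup.zpowers (g ^ ℓ) : Subgroup Fˣ) : Set Fˣ)).ncard := by rw [h2]
    _ = Nat.card (Subgroup.zpowers (g ^ ℓ)) := by
        rw [← Nat.card_coe_set_eq, Nat.card_image_of_injective Units.val_injective]
        rfl
    _ = (Fintype.card F - 1) / ℓ := by
        rw [Nat.card_zpowers, orderOf_pow g, ordg g hg, Nat.gcd_eq_right hℓ]

lemma charne2 (hodd : Odd (Fintype.card F)) : ringChar F ≠ 2 := by
  intro h
  have := FiniteField.even_card_of_char_two h
  rcases hodd with ⟨m, hm⟩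
  omega

lemma neg_one_ne_one' (hodd : Odd (Fintype.card F)) : (-1 : F) ≠ 1 :=
  Ring.neg_one_ne_one_of_char_ne_two (charne2 hodd)

lemma unit_pow_card_sub_one (z : Fˣ) : z ^ (Fintype.card F - 1) = 1 := by
  have h : Nat.card Fˣ = Fintype.card F - 1 := by
    rw [Nat.card_units, Nat.card_eq_fintype_card]
  rw [← h]
  exact _root_.pow_card_eq_one'

lemma neg_one_mem_iff (g : Fˣ) (ℓ : ℕ) (hg : ∀ x : Fˣ, x ∈ Subgroup.zpowers g)
    (hodd : Odd (Fintype.card F)) (hℓ : ℓ ∣ Fintype.card F - 1) (hpos : 0 < ℓ) :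
    ((-1 : F) ∈ Kset (F := F) ℓ) ↔ Even ((Fintype.card F - 1) / ℓ) := by
  have hq2 : 2 ≤ Fintype.card F := Fintype.one_lt_card
  have hq3 : 3 ≤ Fintype.card F := by
    rcases hodd with ⟨m, hm⟩; omega
  have hlk : ℓ * ((Fintype.card F - 1) / ℓ) = Fintype.card F - 1 := Nat.mul_div_cancel' hℓ
  constructor
  · rintro h
    rw [mem_Kset] at h
    obtain ⟨z, hz⟩ := h
    by_contra heven
    have hk : Odd ((Fintype.card F - 1) / ℓ) := Nat.not_even_iff_odd.mp heven
    have h1 : ((z : F) ^ ℓ) ^ ((Fintype.card F - 1) / ℓ) = 1 := by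
      have : (z ^ (Fintype.card F - 1) : Fˣ) = 1 := unit_pow_card_sub_one z
      have h2 : ((z : F)) ^ (Fintype.card F - 1) = 1 := by
        rw [← Units.val_pow_eq_pow_val, this, Units.val_one]
      rw [← pow_mul, hlk, h2]
    rw [← hz, hk.neg_one_pow] at h1
    exact neg_one_ne_one' hodd h1
  · rintro ⟨m, hm⟩
    have hm' : (Fintype.card F - 1) / ℓ = 2 * m := by omega
    have h2 : ℓ * (2 * m) = Fintype.card F - 1 := by rw [← hm', hlk]
    have h2' : 2 * (ℓ * m) = Fintype.card F - 1 := by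
      have h3 : ℓ * (2 * m) = 2 * (ℓ * m) := by ring
      omega
    have hml : 0 < ℓ * m := by omega
    have hmllt : ℓ * m < Fintype.card F - 1 := by omega
    set c : Fˣ := g ^ (ℓ * m) with hc
    have hc2 : c ^ 2 = 1 := by
      rw [hc, ← pow_mul]
      have : ℓ * m * 2 = Fintype.card F - 1 := by
        have h2 : ℓ * (2 * m) = Fintype.card F - 1 := by rw [← hm', hlk]
        ring_nf
        ring_nf at h2
        omega
      rw [this]
      exact unit_pow_card_sub_one g
    have hcne : c ≠ 1 := by
      intro h1
      have hdvd : orderOf g ∣ ℓ * m := orderOf_dvd_of_pow_eq_one h1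
      rw [ordg g hg] at hdvd
      have := Nat.le_of_dvd hml hdvd
      omega
    have hcF : ((c : F)) = -1 := by
      have h1 : ((c : F)) * ((c : F)) = 1 := by
        have := congrArg Units.val hc2
        push_cast at this
        rw [pow_two] at this
        exact_mod_cast this
      rcases mul_self_eq_one_iff.mp h1 with h | h
      · exact absurd (Units.ext h) hcne
      · exact h
    rw [mem_Kset]
    refine ⟨g ^ m, ?_⟩
    rw [← hcF, hc]
    push_cast
    rw [← pow_mul, mul_comm]

def Pij (g : Fˣ) (ℓ : ℕ) (i j : ℤ) (x : F) : Prop :=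
  (∃ y : Fˣ, x = 1 + ((g ^ i * y ^ ℓ : Fˣ) : F)) ∧ ∃ z : Fˣ, x = ((g ^ j * z ^ ℓ : Fˣ) : F)

lemma condEquiv (g : Fˣ) (ℓ : ℕ) (hg : ∀ x : Fˣ, x ∈ Subgroup.zpowers g) (hpos : 0 < ℓ)
    (x w : F) :
    (∃ i j : Fin ℓ, Pij g ℓ ((i:ℕ):ℤ) ((j:ℕ):ℤ) x ∧ Pij g ℓ ((j:ℕ):ℤ) ((i:ℕ):ℤ) w) ↔
    (x ≠ 0 ∧ w ≠ 0 ∧ (∃ s : Fˣ, x - 1 = ((s:F))^ℓ * w) ∧ (∃ t : Fˣ, w - 1 = ((t:F))^ℓ * x)) := by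
  constructor
  · rintro ⟨i, j, ⟨⟨y, hy⟩, z, hz⟩, ⟨y', hy'⟩, z', hz'⟩
    refine ⟨by rw [hz]; exact Units.ne_zero _, by rw [hz']; exact Units.ne_zero _,
      ⟨y * z'⁻¹, ?_⟩, ⟨y' * z⁻¹, ?_⟩⟩
    · rw [hy, hz']
      push_cast
      field_simp
      rw [div_pow, mul_assoc, div_mul_cancel₀ _ (pow_ne_zero _ (Units.ne_zero z'))]
      ring
    · rw [hy', hz]
      push_cast
      field_simp
      rw [div_pow, mul_assoc, div_mul_cancel₀ _ (pow_ne_zero _ (Units.ne_zero z))]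
      ring
  · rintro ⟨hx, hw, ⟨s, hs⟩, t, ht⟩
    obtain ⟨i, zi, hi⟩ := cosetIndex g ℓ hg hpos (Units.mk0 w hw)
    obtain ⟨j, zj, hj⟩ := cosetIndex g ℓ hg hpos (Units.mk0 x hx)
    have hwF : w = ((g ^ ((i:ℕ):ℤ) * zi ^ ℓ : Fˣ) : F) := by
      rw [_root_.zpow_natCast]
      have h := congrArg Units.val hi
      rwa [Units.val_mk0] at h
    have hxF : x = ((g ^ ((j:ℕ):ℤ) * zj ^ ℓ : Fˣ) : F) := by
      rw [_root_.zpow_natCast]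
      have h := congrArg Units.val hj
      rwa [Units.val_mk0] at h
    refine ⟨i, j, ⟨⟨s * zi, ?_⟩, ⟨zj, hxF⟩⟩, ⟨⟨t * zj, ?_⟩, ⟨zi, hwF⟩⟩⟩
    · have : x = 1 + (x - 1) := by ring
      rw [this, hs, hwF]
      push_cast
      ring_nf
    · have : w = 1 + (w - 1) := by ring
      rw [this, ht, hxF]
      push_cast
      ring_nf

def Tc (ℓ : ℕ) (p : F × F) : Prop :=
  p.1 ≠ 0 ∧ p.2 ≠ 0 ∧ (∃ s : Fˣ, p.1 - 1 = ((s:F))^ℓ * p.2) ∧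
    ∃ t : Fˣ, p.2 - 1 = ((t:F))^ℓ * p.1

lemma ne_zero_of_mem_Kset {ℓ : ℕ} {s : F} (h : s ∈ Kset (F := F) ℓ) : s ≠ 0 := by
  rw [mem_Kset] at h
  obtain ⟨z, rfl⟩ := h
  exact pow_ne_zero _ (Units.ne_zero z)

lemma cardPPeq (ℓ : ℕ) [DecidableEq F] :
    ((((Kset (F := F) ℓ).erase (-1)) ×ˢ ((Kset (F := F) ℓ).erase (-1))).filter
      (fun p : F × F => p.1 * p.2 = 1)).card = ((Kset (F := F) ℓ).erase (-1)).card := by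
  classical
  refine Finset.card_bij' (fun p _ => p.1) (fun s _ => (s, s⁻¹)) ?_ ?_ ?_ ?_
  · rintro ⟨a, b⟩ hab
    simp only [Finset.mem_filter, Finset.mem_product] at hab
    exact hab.1.1
  · intro s hs
    have hs1 := Finset.mem_erase.mp hs
    have hs0 : s ≠ 0 := ne_zero_of_mem_Kset hs1.2
    simp only [Finset.mem_filter, Finset.mem_product]
    refine ⟨⟨hs, Finset.mem_erase.mpr ⟨?_, ?_⟩⟩, mul_inv_cancel₀ hs0⟩
    · intro h
      apply hs1.1
      have : s * s⁻¹ = s * (-1) := by rw [h]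
      rw [mul_inv_cancel₀ hs0] at this
      linear_combination this
    · obtain ⟨z, hz⟩ := mem_Kset.mp hs1.2
      rw [mem_Kset]
      refine ⟨z⁻¹, ?_⟩
      rw [hz, ← inv_pow]
      push_cast
      ring
  · rintro ⟨a, b⟩ hab
    simp only [Finset.mem_filter, Finset.mem_product] at hab
    have ha0 : a ≠ 0 := ne_zero_of_mem_Kset (Finset.mem_erase.mp hab.1.1).2
    have : b = a⁻¹ := eq_inv_of_mul_eq_one_right hab.2
    simp [this]
  · intro s _
    rfl

lemma cardTline (ℓ : ℕ) [DecidableEq F] (hne : (-1 : F) ≠ 1) :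
    (Finset.univ.filter (fun p : F × F => Tc ℓ p ∧ p.2 = 1 - p.1)).card
      = if (-1 : F) ∈ Kset (F := F) ℓ then Fintype.card F - 2 else 0 := by
  classical
  by_cases hmem : (-1 : F) ∈ Kset (F := F) ℓ
  · rw [if_pos hmem]
    obtain ⟨σ, hσ⟩ := mem_Kset.mp hmem
    have himg : Finset.univ.filter (fun p : F × F => Tc ℓ p ∧ p.2 = 1 - p.1)
        = (Finset.univ.filter (fun x : F => x ≠ 0 ∧ x ≠ 1)).image (fun x => (x, 1 - x)) := by
      ext ⟨x, w⟩
      simp only [Finset.mem_filter, Finset.mem_univ, true_and, Finset.mem_image]; simp only [Tc]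
      constructor
      · rintro ⟨⟨hx, hw, _, _⟩, hwx⟩
        refine ⟨x, ⟨hx, ?_⟩, by rw [hwx]⟩
        intro h1
        apply hw
        rw [hwx, h1, sub_self]
      · rintro ⟨a, ⟨ha0, ha1⟩, h⟩
        obtain ⟨rfl, rfl⟩ := Prod.mk.injEq .. ▸ h
        have h10 : (1:F) - a ≠ 0 := sub_ne_zero.mpr (Ne.symm ha1)
        exact ⟨⟨ha0, h10, ⟨σ, by linear_combination (1 - a) * hσ⟩,
          ⟨σ, by linear_combination a * hσ⟩⟩, rfl⟩
    rw [himg, Finset.card_image_of_injective _ (fun a b hab => congrArg Prod.fst hab)]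
    have : Finset.univ.filter (fun x : F => x ≠ 0 ∧ x ≠ 1) = Finset.univ \ {0, 1} := by
      ext x
      simp [and_comm]
    rw [this, Finset.card_sdiff_of_subset (Finset.subset_univ _), Finset.card_univ]
    have h2 : ({0, 1} : Finset F).card = 2 := by
      rw [Finset.card_insert_of_notMem (by simp), Finset.card_singleton]
    rw [h2]
  · rw [if_neg hmem]
    rw [Finset.card_eq_zero, Finset.filter_eq_empty_iff]
    rintro ⟨x, w⟩ _
    rintro ⟨⟨hx, hw, ⟨s, hs⟩, -⟩, hwx⟩
    simp only at hx hw hs hwx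
    apply hmem
    rw [mem_Kset]
    refine ⟨s, ?_⟩
    rw [hwx] at hs
    have h1x : (1:F) - x ≠ 0 := by rw [← hwx]; exact hw
    have h3 : ((s:F))^ℓ * (1 - x) = (-1) * (1 - x) := by linear_combination -hs
    have h4 := mul_right_cancel₀ h1x h3
    linear_combination -h4

lemma mem_erase_Kset {ℓ : ℕ} [DecidableEq F] {s : F} :
    s ∈ (Kset (F := F) ℓ).erase (-1) ↔ s ≠ -1 ∧ ∃ z : Fˣ, s = ((z:F))^ℓ := by
  rw [Finset.mem_erase, mem_Kset]

lemma cardTgen (ℓ : ℕ) [DecidableEq F] :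
    ((((Kset (F := F) ℓ).erase (-1)) ×ˢ ((Kset (F := F) ℓ).erase (-1))).filter
      (fun p : F × F => p.1 * p.2 ≠ 1)).card
    = (Finset.univ.filter (fun p : F × F => Tc ℓ p ∧ p.2 ≠ 1 - p.1)).card := by
  classical
  refine Finset.card_bij'
    (fun (p : F × F) _ => ((1 + p.1) / (1 - p.1 * p.2), (1 + p.2) / (1 - p.1 * p.2)))
    (fun (p : F × F) _ => ((p.1 - 1) / p.2, (p.2 - 1) / p.1)) ?_ ?_ ?_ ?_
  · rintro ⟨s, t⟩ hst
    simp only [Finset.mem_filter, Finset.mem_product] at hst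
    obtain ⟨⟨hsE, htE⟩, hst1⟩ := hst
    obtain ⟨hsne, σ, hσ⟩ := mem_erase_Kset.mp hsE
    obtain ⟨htne, τ, hτ⟩ := mem_erase_Kset.mp htE
    have hs1 : 1 + s ≠ 0 := fun h => hsne (by linear_combination h)
    have ht1 : 1 + t ≠ 0 := fun h => htne (by linear_combination h)
    have hd : 1 - s * t ≠ 0 := fun h => hst1 (by linear_combination -h)
    simp only [Finset.mem_filter, Finset.mem_univ, true_and]; simp only [Tc]
    refine ⟨⟨div_ne_zero hs1 hd, div_ne_zero ht1 hd, ⟨σ, ?_⟩, ⟨τ, ?_⟩⟩, ?_⟩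
    · rw [← hσ]
      field_simp
      ring
    · rw [← hτ, div_sub_one hd, mul_div_assoc', div_left_inj' hd]
      ring
    · intro h
      have h2 : (1+t)/(1-s*t) * (1-s*t) = (1 - (1+s)/(1-s*t)) * (1-s*t) := by rw [h]
      rw [div_mul_cancel₀ _ hd, sub_mul, div_mul_cancel₀ _ hd, one_mul] at h2
      have h3 : (1 + s) * (1 + t) = 0 := by linear_combination h2
      rcases mul_eq_zero.mp h3 with h' | h'
      · exact hs1 h'
      · exact ht1 h'
  · rintro ⟨x, w⟩ hxw
    simp only [Finset.mem_filter, Finset.mem_univ, true_and] at hxw; simp only [Tc] at hxw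
    obtain ⟨⟨hx, hw, ⟨σ, hσ⟩, τ, hτ⟩, hne⟩ := hxw
    have hxw1 : x + w - 1 ≠ 0 := fun h => hne (by linear_combination h)
    simp only [Finset.mem_filter, Finset.mem_product]
    refine ⟨⟨mem_erase_Kset.mpr ⟨?_, σ, ?_⟩, mem_erase_Kset.mpr ⟨?_, τ, ?_⟩⟩, ?_⟩
    · intro h
      rw [div_eq_iff hw] at h
      exact hxw1 (by linear_combination h)
    · rw [hσ]
      field_simp
    · intro h
      rw [div_eq_iff hx] at h
      exact hxw1 (by linear_combination h)
    · rw [hτ]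
      field_simp
    · intro h
      rw [div_mul_div_comm, div_eq_one_iff_eq (mul_ne_zero hw hx)] at h
      exact hxw1 (by linear_combination -h)
  · rintro ⟨s, t⟩ hst
    simp only [Finset.mem_filter, Finset.mem_product] at hst
    obtain ⟨⟨hsE, htE⟩, hst1⟩ := hst
    obtain ⟨hsne, σ, hσ⟩ := mem_erase_Kset.mp hsE
    obtain ⟨htne, τ, hτ⟩ := mem_erase_Kset.mp htE
    have hs1 : 1 + s ≠ 0 := fun h => hsne (by linear_combination h)
    have ht1 : 1 + t ≠ 0 := fun h => htne (by linear_combination h)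
    have hd : 1 - s * t ≠ 0 := fun h => hst1 (by linear_combination -h)
    have hx0 : (1 + s) / (1 - s * t) ≠ 0 := div_ne_zero hs1 hd
    have hw0 : (1 + t) / (1 - s * t) ≠ 0 := div_ne_zero ht1 hd
    simp only [Prod.mk.injEq]
    constructor
    · rw [div_eq_iff hw0]
      field_simp
      ring
    · rw [div_eq_iff hx0, div_sub_one hd, mul_div_assoc', div_left_inj' hd]
      ring
  · rintro ⟨x, w⟩ hxw
    simp only [Finset.mem_filter, Finset.mem_univ, true_and] at hxw; simp only [Tc] at hxw
    obtain ⟨⟨hx, hw, ⟨σ, hσ⟩, τ, hτ⟩, hne⟩ := hxw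
    have hxw1 : x + w - 1 ≠ 0 := fun h => hne (by linear_combination h)
    have hd : 1 - (x - 1) / w * ((w - 1) / x) ≠ 0 := by
      have he : 1 - (x - 1) / w * ((w - 1) / x) = (x + w - 1) / (w * x) := by
        field_simp
        ring
      rw [he]
      exact div_ne_zero hxw1 (mul_ne_zero hw hx)
    simp only [Prod.mk.injEq]
    constructor
    · rw [div_eq_iff hd]
      field_simp
      ring
    · rw [div_eq_iff hd]
      field_simp
      ring


lemma cosetUniqueF {F : Type*} [Field F] [Fintype F] (g : Fˣ) (ℓ : ℕ)
    (hg : ∀ x : Fˣ, x ∈ Subgroup.zpowers g) (hℓ : ℓ ∣ Fintype.card F - 1)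
    (j j' : Fin ℓ) (z z' : Fˣ) (x : F)
    (h1 : x = ((g ^ ((j:ℕ):ℤ) * z ^ ℓ : Fˣ) : F))
    (h2 : x = ((g ^ ((j':ℕ):ℤ) * z' ^ ℓ : Fˣ) : F)) : j = j' := by
  apply cosetUnique g ℓ hg hℓ j j' z z'
  apply Units.ext
  rw [← _root_.zpow_natCast g (j:ℕ), ← _root_.zpow_natCast g (j':ℕ)]
  exact (h1.symm.trans h2 : _)

end Aux

theorem trace_cycMatrix_sq {F : Type*} [Field F] [Fintype F] (g : Fˣ) (ℓ : ℕ)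
    (hg : ∀ x : Fˣ, x ∈ Subgroup.zpowers g)
    (hodd : Odd (Fintype.card F)) (hℓ : ℓ ∣ Fintype.card F - 1)
    (k : ℕ) (hk : k = (Fintype.card F - 1) / ℓ)
    (A : Matrix (Fin ℓ) (Fin ℓ) ℤ) (hA : A = cycMatrix g ℓ) :
    Matrix.trace (A * A) =
      if Even k then (k : ℤ) * (k - 1) + Fintype.card F - 2 * k
      else (k : ℤ) * (k - 1) := by
  classical
  subst hA
  have hq2 : 2 ≤ Fintype.card F := Fintype.one_lt_card
  have hq3 : 3 ≤ Fintype.card F := by rcases hodd with ⟨m, hm⟩; omega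
  have hpos : 0 < ℓ := by
    rcases Nat.eq_zero_or_pos ℓ with h | h
    · rw [h, zero_dvd_iff] at hℓ; omega
    · exact h
  have hk1 : 1 ≤ k := by
    rw [hk]
    exact Nat.div_pos (Nat.le_of_dvd (by omega) hℓ) hpos
  -- the predicates
  have hcyc : ∀ i j : Fin ℓ, cyc g ℓ ((i:ℕ):ℤ) ((j:ℕ):ℤ)
      = (univ.filter (fun x : F => Pij g ℓ ((i:ℕ):ℤ) ((j:ℕ):ℤ) x)).card := by
    intro i j
    rw [show cyc g ℓ ((i:ℕ):ℤ) ((j:ℕ):ℤ)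
        = Nat.card {x : F // Pij g ℓ ((i:ℕ):ℤ) ((j:ℕ):ℤ) x} from rfl,
      Nat.card_eq_fintype_card, Fintype.card_subtype]
  set S : Fin ℓ × Fin ℓ → Finset (F × F) := fun c =>
    univ.filter (fun p : F × F =>
      Pij g ℓ ((c.1:ℕ):ℤ) ((c.2:ℕ):ℤ) p.1 ∧ Pij g ℓ ((c.2:ℕ):ℤ) ((c.1:ℕ):ℤ) p.2) with hS
  have hprod : ∀ i j : Fin ℓ,
      cyc g ℓ ((i:ℕ):ℤ) ((j:ℕ):ℤ) * cyc g ℓ ((j:ℕ):ℤ) ((i:ℕ):ℤ) = (S (i, j)).card := by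
    intro i j
    rw [hcyc i j, hcyc j i, ← Finset.card_product]
    congr 1
    ext ⟨x, y⟩
    simp [hS, Finset.mem_product, Finset.mem_filter]
  have hdisj : ∀ c ∈ (univ : Finset (Fin ℓ × Fin ℓ)), ∀ c' ∈ (univ : Finset (Fin ℓ × Fin ℓ)),
      c ≠ c' → Disjoint (S c) (S c') := by
    rintro ⟨i, j⟩ - ⟨i', j'⟩ - hne
    rw [Finset.disjoint_left]
    rintro ⟨x, w⟩ hp hp'
    simp only [hS, Finset.mem_filter, Finset.mem_univ, true_and] at hp hp'
    obtain ⟨z1, hz1⟩ := hp.1.2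
    obtain ⟨z1', hz1'⟩ := hp'.1.2
    obtain ⟨z2, hz2⟩ := hp.2.2
    obtain ⟨z2', hz2'⟩ := hp'.2.2
    exact hne (Prod.ext (cosetUniqueF g ℓ hg hℓ i i' z2 z2' w hz2 hz2')
      (cosetUniqueF g ℓ hg hℓ j j' z1 z1' x hz1 hz1'))
  have step2 : ∑ i : Fin ℓ, ∑ j : Fin ℓ, (S (i, j)).card
      = ((univ : Finset (Fin ℓ × Fin ℓ)).biUnion S).card := by
    rw [Finset.card_biUnion hdisj]
    exact (Fintype.sum_prod_type (f := fun u : Fin ℓ × Fin ℓ => (S u).card)).symm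
  have step3 : (univ : Finset (Fin ℓ × Fin ℓ)).biUnion S
      = univ.filter (fun p : F × F => Tc ℓ p) := by
    ext ⟨x, w⟩
    simp only [Finset.mem_biUnion, Finset.mem_univ, true_and, Finset.mem_filter]
    constructor
    · rintro ⟨⟨i, j⟩, hm⟩
      simp only [hS, Finset.mem_filter, Finset.mem_univ, true_and] at hm
      exact (condEquiv g ℓ hg hpos x w).mp ⟨i, j, hm⟩
    · intro h
      obtain ⟨i, j, hij⟩ := (condEquiv g ℓ hg hpos x w).mpr h
      refine ⟨(i, j), ?_⟩
      simp only [hS, Finset.mem_filter, Finset.mem_univ, true_and]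
      exact hij
  have step4 : (univ.filter (fun p : F × F => Tc ℓ p)).card
      = (univ.filter (fun p : F × F => Tc ℓ p ∧ p.2 ≠ 1 - p.1)).card
        + (univ.filter (fun p : F × F => Tc ℓ p ∧ p.2 = 1 - p.1)).card := by
    have h := Finset.card_filter_add_card_filter_not
      (s := univ.filter (fun p : F × F => Tc ℓ p)) (fun p : F × F => p.2 ≠ 1 - p.1)
    rw [Finset.filter_filter, Finset.filter_filter] at h
    simp only [ne_eq, not_not] at h
    simp only [ne_eq]
    omega
  have hTgen := cardTgen (F := F) ℓ
  have hPP := cardPPeq (F := F) ℓ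
  have hTline := cardTline (F := F) ℓ (neg_one_ne_one' hodd)
  have hPPsplit := Finset.card_filter_add_card_filter_not
    (s := ((Kset (F := F) ℓ).erase (-1)) ×ˢ ((Kset (F := F) ℓ).erase (-1)))
    (fun p : F × F => p.1 * p.2 = 1)
  rw [Finset.card_product, hPP] at hPPsplit
  set m := ((Kset (F := F) ℓ).erase (-1)).card with hm
  have hAne : ((((Kset (F := F) ℓ).erase (-1)) ×ˢ ((Kset (F := F) ℓ).erase (-1))).filter
      (fun p : F × F => ¬ p.1 * p.2 = 1)).card = m * m - m := by omega
  have hNtotal : ∑ i : Fin ℓ, ∑ j : Fin ℓ,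
      cyc g ℓ ((i:ℕ):ℤ) ((j:ℕ):ℤ) * cyc g ℓ ((j:ℕ):ℤ) ((i:ℕ):ℤ)
      = (m * m - m) + (if (-1 : F) ∈ Kset (F := F) ℓ then Fintype.card F - 2 else 0) := by
    calc ∑ i : Fin ℓ, ∑ j : Fin ℓ,
        cyc g ℓ ((i:ℕ):ℤ) ((j:ℕ):ℤ) * cyc g ℓ ((j:ℕ):ℤ) ((i:ℕ):ℤ)
        = ∑ i : Fin ℓ, ∑ j : Fin ℓ, (S (i, j)).card := by
          refine Finset.sum_congr rfl fun i _ => Finset.sum_congr rfl fun j _ => hprod i j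
      _ = (univ.filter (fun p : F × F => Tc ℓ p)).card := by rw [step2, step3]
      _ = (m * m - m) + (if (-1 : F) ∈ Kset (F := F) ℓ then Fintype.card F - 2 else 0) := by
          rw [step4, ← hTgen, hAne, hTline]
  have htrace : Matrix.trace (cycMatrix g ℓ * cycMatrix g ℓ)
      = ((∑ i : Fin ℓ, ∑ j : Fin ℓ,
          cyc g ℓ ((i:ℕ):ℤ) ((j:ℕ):ℤ) * cyc g ℓ ((j:ℕ):ℤ) ((i:ℕ):ℤ) : ℕ) : ℤ) := by
    simp only [Matrix.trace, Matrix.diag, Matrix.mul_apply, cycMatrix, Matrix.of_apply]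
    push_cast
    rfl
  rw [htrace, hNtotal]
  by_cases hev : Even k
  · rw [if_pos hev]
    have hmem : (-1 : F) ∈ Kset (F := F) ℓ :=
      (neg_one_mem_iff g ℓ hg hodd hℓ hpos).mpr (hk ▸ hev)
    have hk2 : 2 ≤ k := by
      rcases hev with ⟨c, hc⟩; omega
    have hmval : m = k - 1 := by
      rw [hm, Finset.card_erase_of_mem hmem, KsetCard g ℓ hg hℓ, hk]
    rw [if_pos hmem, hmval]
    have h1 : 1 ≤ k - 1 := by omega
    have hle : k - 1 ≤ (k - 1) * (k - 1) := Nat.le_mul_of_pos_left _ (by omega)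
    push_cast [Nat.cast_sub hle, Nat.cast_sub h1, Nat.cast_sub (by omega : 2 ≤ Fintype.card F),
      Nat.cast_sub hk1]
    ring
  · rw [if_neg hev]
    have hmem : ¬ (-1 : F) ∈ Kset (F := F) ℓ := fun h =>
      hev (hk ▸ ((neg_one_mem_iff g ℓ hg hodd hℓ hpos).mp h))
    have hmval : m = k := by
      rw [hm, Finset.erase_eq_of_notMem hmem, KsetCard g ℓ hg hℓ, hk]
    rw [if_neg hmem, hmval]
    have hle : k ≤ k * k := Nat.le_mul_of_pos_left _ (by omega)
    push_cast [Nat.cast_sub hle, Nat.cast_sub hk1]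
    ring
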